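/- Let u₁,…,u_s : ℝ → ℝ be continuously differentiable, with the s+2 functions 1, t, u₁,…,u_s linearly independent over ℝ. Then the vector function u(t) = (1, t, u₁(t), …, u_s(t))ᵀ is separable (i.e., there exists a matrix function 𝓕 : ℝ → ℝ^{(s+2)×(s+2)} with u(t+h) = 𝓕(h)·u(t) = 𝓕(t)·u(h) for all t,h) if and only if each derivative u_k' (k = 1,…,s) lies in the linear span of {1, t, u₁, …, u_s}. -/

import Mathlib

open Matrix BigOperators NormedSpace Topology Filter

lemma aux_exp {n : ℕ} (w : ℝ → (Fin n → ℝ)) (M : (Fin n → ℝ) →L[ℝ] (Fin n → ℝ))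
    (hw : ∀ t, HasDerivAt w (M (w t)) t) :
    ∀ t h : ℝ, w (t + h) = exp (h • M) (w t) := by
  intro t h
  have hg : ∀ x : ℝ, HasDerivAt (fun y : ℝ => exp ((-y) • M) (w (t + y))) 0 x := by
    intro x
    have hc : HasDerivAt (fun y : ℝ => exp ((-y) • M)) ((-1 : ℝ) • (exp ((-x) • M) * M)) x := by
      have h1 : HasDerivAt (fun y : ℝ => exp (y • M)) (exp ((-x) • M) * M) (-x) :=
        hasDerivAt_exp_smul_const (𝕂 := ℝ) M (-x)
      have h2 : HasDerivAt (fun y : ℝ => -y) (-1 : ℝ) x := (hasDerivAt_id x).neg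
      exact h1.scomp x h2
    have hu : HasDerivAt (fun y : ℝ => w (t + y)) (M (w (t + x))) x := by
      have h2 : HasDerivAt (fun y : ℝ => t + y) 1 x := (hasDerivAt_id x).const_add t
      simpa [Function.comp_def] using (hw (t + x)).scomp x h2
    have := hc.clm_apply hu
    refine this.congr_deriv ?_
    simp [ContinuousLinearMap.mul_apply]
  have hconst : (fun y : ℝ => exp ((-y) • M) (w (t + y))) h
      = (fun y : ℝ => exp ((-y) • M) (w (t + y))) 0 :=
    is_const_of_deriv_eq_zero (fun x => (hg x).differentiableAt)
      (fun x => (hg x).deriv) h 0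
  simp only [neg_zero, zero_smul, exp_zero, add_zero, ContinuousLinearMap.one_apply] at hconst
  have hmul : exp (h • M) * exp ((-h) • M) = 1 := by
    let +nondep : NormedAlgebra ℚ ((Fin n → ℝ) →L[ℝ] (Fin n → ℝ)) := .restrictScalars ℚ ℝ _
    rw [← NormedSpace.exp_add_of_commute (((Commute.refl M).smul_left h).smul_right (-h))]
    rw [← add_smul, add_neg_cancel, zero_smul, exp_zero]
  calc w (t + h) = (exp (h • M) * exp ((-h) • M)) (w (t + h)) := by
        rw [hmul]; simp
    _ = exp (h • M) (exp ((-h) • M) (w (t + h))) := by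
        simp [ContinuousLinearMap.mul_apply]
    _ = exp (h • M) (w t) := by rw [hconst]

theorem stmt_6 (s : ℕ) (u : Fin s → ℝ → ℝ) (hu : ∀ k, ContDiff ℝ 1 (u k))
    (hind : LinearIndependent ℝ
      (Fin.cons (fun _ : ℝ => (1 : ℝ)) (Fin.cons (fun x : ℝ => x) u) :
        Fin (s + 2) → ℝ → ℝ)) :
    (∃ 𝓕 : ℝ → Matrix (Fin (s + 2)) (Fin (s + 2)) ℝ, ∀ t h : ℝ,
      (Fin.cons 1 (Fin.cons (t + h) fun k => u k (t + h)) : Fin (s + 2) → ℝ)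
        = 𝓕 h *ᵥ (Fin.cons 1 (Fin.cons t fun k => u k t)) ∧
      (Fin.cons 1 (Fin.cons (t + h) fun k => u k (t + h)) : Fin (s + 2) → ℝ)
        = 𝓕 t *ᵥ (Fin.cons 1 (Fin.cons h fun k => u k h))) ↔
    (∀ k, deriv (u k) ∈ Submodule.span ℝ
      (Set.range
        (Fin.cons (fun _ : ℝ => (1 : ℝ)) (Fin.cons (fun x : ℝ => x) u) :
          Fin (s + 2) → ℝ → ℝ))) := by
  set v : Fin (s + 2) → ℝ → ℝ :=
    Fin.cons (fun _ : ℝ => (1 : ℝ)) (Fin.cons (fun x : ℝ => x) u) with hv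
  set V : Submodule ℝ (ℝ → ℝ) := Submodule.span ℝ (Set.range v) with hV
  have hwv : ∀ (t : ℝ) (i : Fin (s + 2)),
      (Fin.cons 1 (Fin.cons t fun k => u k t) : Fin (s + 2) → ℝ) i = v i t := by
    intro t i
    refine Fin.cases ?_ (fun j => ?_) i
    · simp [hv]
    · refine Fin.cases ?_ (fun m => ?_) j <;> simp [hv]
  constructor
  · rintro ⟨𝓕, hF⟩ k
    haveI : FiniteDimensional ℝ V := FiniteDimensional.span_of_finite ℝ (Set.finite_range v)
    have hVc : IsClosed (V : Set (ℝ → ℝ)) := V.closed_of_finiteDimensional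
    have hu_mem : u k ∈ V := by
      refine Submodule.subset_span ⟨k.succ.succ, ?_⟩
      simp [hv]
    have hmem : ∀ h : ℝ, (fun t => u k (t + h)) ∈ V := by
      intro h
      rw [hV, Submodule.mem_span_range_iff_exists_fun]
      refine ⟨fun j => 𝓕 h (Fin.succ (Fin.succ k)) j, ?_⟩
      funext t
      rw [Finset.sum_apply]
      simp only [Pi.smul_apply, smul_eq_mul]
      have := congrFun (hF t h).1 (Fin.succ (Fin.succ k))
      simp only [Fin.cons_succ] at this
      rw [this]
      simp only [Matrix.mulVec, dotProduct]
      exact Finset.sum_congr rfl fun j _ => by rw [hwv t j]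
    set G : ℝ → (ℝ → ℝ) := fun h => h⁻¹ • ((fun t => u k (t + h)) - u k) with hGdef
    have hG : ∀ h, G h ∈ V := fun h => V.smul_mem _ (V.sub_mem (hmem h) hu_mem)
    have htt : Filter.Tendsto G (𝓝[≠] (0:ℝ)) (𝓝 (deriv (u k))) := by
      rw [tendsto_pi_nhds]
      intro t
      have hd : HasDerivAt (u k) (deriv (u k) t) t :=
        (((hu k).differentiable one_ne_zero) t).hasDerivAt
      have h1 := hasDerivAt_iff_tendsto_slope.mp hd
      have h2 : Filter.Tendsto (fun h : ℝ => t + h) (𝓝[≠] (0:ℝ)) (𝓝[≠] t) := by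
        rw [tendsto_nhdsWithin_iff]
        constructor
        · have ht : Filter.Tendsto (fun h : ℝ => t + h) (𝓝 (0:ℝ)) (𝓝 t) := by
            simpa using (continuous_add_left t).tendsto (0:ℝ)
          exact ht.mono_left nhdsWithin_le_nhds
        · filter_upwards [self_mem_nhdsWithin] with x hx
          simp only [Set.mem_compl_iff, Set.mem_singleton_iff] at hx ⊢
          exact fun hc => hx (by linarith)
      have h3 := h1.comp h2
      refine h3.congr fun h => ?_
      simp [hGdef, slope, vsub_eq_sub, add_sub_cancel_left]
    exact hVc.mem_of_tendsto htt (Filter.Eventually.of_forall hG)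
  · intro hd
    have hcd : ∀ i, ContDiff ℝ 1 (v i) := by
      intro i
      refine Fin.cases ?_ (fun j => ?_) i
      · simpa [hv] using contDiff_const (c := (1:ℝ))
      · refine Fin.cases ?_ (fun m => ?_) j
        · simpa [hv] using contDiff_fun_id
        · simpa [hv] using hu m
    have hd' : ∀ i, deriv (v i) ∈ V := by
      intro i
      refine Fin.cases ?_ (fun j => ?_) i
      · have : deriv (v 0) = 0 := by
          funext x; simp [hv]
        rw [this]; exact V.zero_mem
      · refine Fin.cases ?_ (fun m => ?_) j
        · have h6 : deriv (v (Fin.succ 0)) = v 0 := by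
            funext x; simp [hv]
          rw [h6]; exact Submodule.subset_span ⟨0, rfl⟩
        · have : deriv (v m.succ.succ) = deriv (u m) := by simp [hv]
          rw [this]; exact hd m
    have hd'' : ∀ i, ∃ c : Fin (s + 2) → ℝ, ∑ j, c j • v j = deriv (v i) := by
      intro i
      rw [← Submodule.mem_span_range_iff_exists_fun]
      exact hd' i
    choose A hA using hd''
    set w : ℝ → (Fin (s + 2) → ℝ) :=
      fun t => Fin.cons 1 (Fin.cons t fun k => u k t) with hwdef
    set M : (Fin (s + 2) → ℝ) →L[ℝ] (Fin (s + 2) → ℝ) :=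
      LinearMap.toContinuousLinearMap (Matrix.mulVecLin (Matrix.of A)) with hM
    have hwM : ∀ t, HasDerivAt w (M (w t)) t := by
      intro t
      rw [hasDerivAt_pi]
      intro i
      have e1 : (fun t => w t i) = v i := funext fun t => hwv t i
      have e2 : (M (w t)) i = deriv (v i) t := by
        have h5 := congrFun (hA i) t
        rw [Finset.sum_apply] at h5
        simp only [Pi.smul_apply, smul_eq_mul] at h5
        rw [← h5]
        simp [hM, Matrix.mulVecLin_apply, Matrix.mulVec, dotProduct]
        exact Finset.sum_congr rfl fun j _ => by rw [show w t j = v j t from hwv t j]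
      rw [e1, e2]
      exact ((hcd i).differentiable one_ne_zero).differentiableAt.hasDerivAt
    have key : ∀ a b : ℝ,
        w (a + b) = (LinearMap.toMatrix' ((exp (b • M)).toLinearMap)) *ᵥ w a := by
      intro a b
      calc w (a + b) = exp (b • M) (w a) := aux_exp w M hwM a b
        _ = Matrix.toLin' (LinearMap.toMatrix' ((exp (b • M)).toLinearMap)) (w a) := by
            rw [Matrix.toLin'_toMatrix']; rfl
        _ = _ := Matrix.toLin'_apply _ _
    refine ⟨fun h => LinearMap.toMatrix' ((exp (h • M)).toLinearMap), fun t h => ⟨?_, ?_⟩⟩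
    · exact key t h
    · rw [show t + h = h + t from add_comm t h]
      exact key h t
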